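/- Let (N,ν) be a measure space, 1 < p < ∞, γ > 0, and u ∈ L^p(N). Then ∫_N exp_{⌈p-2⌉}(γ|u|^{p'}) dν ≤ ∫_{{|u|≥1}} e^{γ|u|^{p'}} dν + e^γ ‖u‖_p^p, where p' = p/(p-1) and exp_m(t) = e^t − Σ_{k=0}^m t^k/k!. -/

import Mathlib

open MeasureTheory ENNReal

/-- Regularized exponential: `exp_m(t) = e^t − Σ_{k=0}^m t^k/k!`. -/
noncomputable def expReg (m : ℕ) (t : ℝ) : ℝ :=
  Real.exp t - ∑ k ∈ Finset.range (m + 1), t ^ k / (Nat.factorial k)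

lemma real_exp_eq_tsum (x : ℝ) : Real.exp x = ∑' n : ℕ, x ^ n / n.factorial := by
  rw [Real.exp_eq_exp_ℝ, NormedSpace.exp_eq_tsum_div]

lemma expReg_eq_tsum (m : ℕ) (x : ℝ) :
    expReg m x = ∑' k : ℕ, x ^ (k + (m + 1)) / (k + (m + 1)).factorial := by
  have h := (Real.summable_pow_div_factorial x).sum_add_tsum_nat_add
    (f := fun n : ℕ => x ^ n / n.factorial) (m + 1)
  unfold expReg
  rw [real_exp_eq_tsum, ← h]
  ring

lemma expReg_nonneg (m : ℕ) {x : ℝ} (hx : 0 ≤ x) : 0 ≤ expReg m x := by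
  rw [expReg_eq_tsum]
  exact tsum_nonneg fun k => div_nonneg (pow_nonneg hx _) (Nat.cast_nonneg _)

lemma expReg_le_exp (m : ℕ) {x : ℝ} (hx : 0 ≤ x) : expReg m x ≤ Real.exp x := by
  unfold expReg
  have : (0:ℝ) ≤ ∑ k ∈ Finset.range (m + 1), x ^ k / (Nat.factorial k) :=
    Finset.sum_nonneg fun k _ => div_nonneg (pow_nonneg hx _) (Nat.cast_nonneg _)
  linarith

/-- Key pointwise bound: if `0 ≤ a ≤ 1` and `a ^ (m+1) ≤ c`, then
`expReg m (γ * a) ≤ c * exp γ`. -/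
lemma expReg_le (m : ℕ) {a c γ : ℝ} (ha : 0 ≤ a) (ha1 : a ≤ 1) (hγ : 0 ≤ γ)
    (hc : a ^ (m + 1) ≤ c) : expReg m (γ * a) ≤ c * Real.exp γ := by
  rw [expReg_eq_tsum, real_exp_eq_tsum]
  have hsum : Summable (fun k : ℕ => (γ * a) ^ (k + (m + 1)) / (k + (m + 1)).factorial) :=
    (Real.summable_pow_div_factorial (γ * a)).comp_injective (add_left_injective (m + 1))
  have hsum2 : Summable (fun k : ℕ => c * (γ ^ (k + (m + 1)) / (k + (m + 1)).factorial)) :=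
    (((Real.summable_pow_div_factorial γ).comp_injective
      (add_left_injective (m + 1))).mul_left c)
  calc ∑' k : ℕ, (γ * a) ^ (k + (m + 1)) / (k + (m + 1)).factorial
      ≤ ∑' k : ℕ, c * (γ ^ (k + (m + 1)) / (k + (m + 1)).factorial) := by
        refine hsum.tsum_le_tsum (fun k => ?_) hsum2
        have h1 : (γ * a) ^ (k + (m + 1)) / ((k + (m + 1)).factorial : ℝ)
            = a ^ (k + (m + 1)) * (γ ^ (k + (m + 1)) / (k + (m + 1)).factorial) := by
          rw [mul_pow]; ring
        have h2 : a ^ (k + (m + 1)) ≤ c :=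
          le_trans (pow_le_pow_of_le_one ha ha1 (by omega)) hc
        rw [h1]
        exact mul_le_mul_of_nonneg_right h2
          (div_nonneg (pow_nonneg hγ _) (Nat.cast_nonneg _))
    _ = c * ∑' k : ℕ, γ ^ (k + (m + 1)) / (k + (m + 1)).factorial := tsum_mul_left
    _ ≤ c * ∑' k : ℕ, γ ^ k / (Nat.factorial k) := by
        refine mul_le_mul_of_nonneg_left ?_ (le_trans (pow_nonneg ha _) hc)
        refine ((Real.summable_pow_div_factorial γ).comp_injective (add_left_injective (m + 1))).tsum_le_tsum_of_inj (fun k => k + (m + 1)) (add_left_injective (m + 1))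
          (fun k _ => div_nonneg (pow_nonneg hγ _) (Nat.cast_nonneg _)) (fun k => le_rfl)
          (Real.summable_pow_div_factorial γ)

/-- Exponential Regularization Lemma, upper bound:
`∫_N exp_{⌈p-2⌉}(γ|u|^{p'}) dν ≤ ∫_{|u|≥1} e^{γ|u|^{p'}} dν + e^γ ‖u‖_p^p`. -/
theorem stmt_2 {N : Type*} [MeasurableSpace N] (ν : Measure N) (p γ : ℝ)
    (hp : 1 < p) (hγ : 0 < γ) (u : N → ℝ)
    (hu : MemLp u (ENNReal.ofReal p) ν) :
    (∫⁻ x, ENNReal.ofReal (expReg ⌈p - 2⌉₊ (γ * |u x| ^ (p / (p - 1)))) ∂ν)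
      ≤ (∫⁻ x in {x | 1 ≤ |u x|},
            ENNReal.ofReal (Real.exp (γ * |u x| ^ (p / (p - 1)))) ∂ν)
        + ENNReal.ofReal (Real.exp γ) * ∫⁻ x, ENNReal.ofReal (|u x| ^ p) ∂ν := by
  have hp1 : (0:ℝ) < p - 1 := by linarith
  have hp' : 0 < p / (p - 1) := div_pos (by linarith) hp1
  set m := ⌈p - 2⌉₊ with hm
  set s : Set N := {x | 1 ≤ |u x|} with hs
  set g : N → ℝ≥0∞ := fun x => ENNReal.ofReal (Real.exp γ) * ENNReal.ofReal (|u x| ^ p)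
    with hgdef
  have key : ∀ x, ENNReal.ofReal (expReg m (γ * |u x| ^ (p / (p - 1))))
      ≤ s.indicator (fun x => ENNReal.ofReal (Real.exp (γ * |u x| ^ (p / (p - 1))))) x
        + g x := by
    intro x
    have habs : 0 ≤ |u x| := abs_nonneg _
    have harg : 0 ≤ γ * |u x| ^ (p / (p - 1)) :=
      mul_nonneg hγ.le (Real.rpow_nonneg habs _)
    by_cases hx : x ∈ s
    · refine le_trans ?_ le_self_add
      rw [Set.indicator_of_mem hx]
      exact ENNReal.ofReal_le_ofReal (expReg_le_exp m harg)
    · rw [Set.indicator_of_notMem hx, zero_add]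
      have hlt : |u x| < 1 := not_le.mp hx
      have ha1 : |u x| ^ (p / (p - 1)) ≤ 1 := Real.rpow_le_one habs hlt.le hp'.le
      have hexp : p ≤ p / (p - 1) * (m + 1) := by
        have hceil : p - 2 ≤ (m : ℝ) := Nat.le_ceil _
        have h1 : p - 1 ≤ (m : ℝ) + 1 := by linarith
        calc p = p / (p - 1) * (p - 1) := by field_simp
          _ ≤ p / (p - 1) * ((m : ℝ) + 1) := by
              exact mul_le_mul_of_nonneg_left h1 hp'.le
      have hc : (|u x| ^ (p / (p - 1))) ^ (m + 1) ≤ |u x| ^ p := by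
        rw [← Real.rpow_natCast (|u x| ^ (p / (p - 1))) (m + 1), ← Real.rpow_mul habs]
        push_cast
        rcases eq_or_lt_of_le habs with h0 | h0
        · rw [← h0, Real.zero_rpow (by positivity), Real.zero_rpow (by positivity)]
        · exact Real.rpow_le_rpow_of_exponent_ge h0 hlt.le (by linarith)
      calc ENNReal.ofReal (expReg m (γ * |u x| ^ (p / (p - 1))))
          ≤ ENNReal.ofReal (|u x| ^ p * Real.exp γ) :=
            ENNReal.ofReal_le_ofReal
              (expReg_le m (Real.rpow_nonneg habs _) ha1 hγ.le hc)
        _ = g x := by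
            rw [hgdef, ENNReal.ofReal_mul (Real.rpow_nonneg habs _), mul_comm]
  have hg : AEMeasurable g ν := by
    have habsm : AEMeasurable (fun x => |u x|) ν :=
      measurable_abs.comp_aemeasurable hu.1.aemeasurable
    have h1 : AEMeasurable (fun x => |u x| ^ p) ν := habsm.pow aemeasurable_const
    exact (ENNReal.measurable_ofReal.comp_aemeasurable h1).const_mul _
  calc ∫⁻ x, ENNReal.ofReal (expReg m (γ * |u x| ^ (p / (p - 1)))) ∂ν
      ≤ ∫⁻ x, (s.indicator
          (fun x => ENNReal.ofReal (Real.exp (γ * |u x| ^ (p / (p - 1))))) x + g x) ∂ν :=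
        lintegral_mono key
    _ = (∫⁻ x, s.indicator
          (fun x => ENNReal.ofReal (Real.exp (γ * |u x| ^ (p / (p - 1))))) x ∂ν)
        + ∫⁻ x, g x ∂ν := lintegral_add_right' _ hg
    _ ≤ (∫⁻ x in s, ENNReal.ofReal (Real.exp (γ * |u x| ^ (p / (p - 1)))) ∂ν)
        + ENNReal.ofReal (Real.exp γ) * ∫⁻ x, ENNReal.ofReal (|u x| ^ p) ∂ν := by
        refine add_le_add (lintegral_indicator_le _ _) (le_of_eq ?_)
        exact lintegral_const_mul' _ _ ENNReal.ofReal_ne_top
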